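/- Let d ≥ 1 be an integer, let z₁, …, z_d ∈ ℂ, and let p(z) = ∏_{j=1}^d (z − z_j). Define ℓ₀(z) = min_{1≤j≤d} |z − z_j|. Then for every integer 0 ≤ k ≤ d and every z ∈ ℂ: |p^{(k)}(z)| (ℓ₀(z))^k ≤ (d!/(d−k)!) |p(z)|. -/

import Mathlib

open MeasureTheory Real Set
open scoped ENNReal NNReal Topology Classical

noncomputable section

open Polynomial in
lemma aux_deriv_sum {ι : Type*} (k : ℕ) (s : Finset ι) (f : ι → ℂ[X]) :
    derivative^[k] (∑ j ∈ s, f j) = ∑ j ∈ s, derivative^[k] (f j) := by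
  induction k with
  | zero => simp
  | succ k ih =>
    rw [Function.iterate_succ_apply', ih, derivative_sum]
    exact Finset.sum_congr rfl fun j _ => (Function.iterate_succ_apply' _ _ _).symm

open Polynomial in
lemma aux_deriv_prod (d : ℕ) (z : Fin d → ℂ) (s : Finset (Fin d)) :
    derivative (∏ j ∈ s, (X - C (z j))) =
      ∑ j ∈ s, ∏ i ∈ s.erase j, (X - C (z i)) := by
  induction s using Finset.induction with
  | empty => simp
  | @insert a s ha ih =>
    rw [Finset.prod_insert ha, derivative_mul, ih, Finset.sum_insert ha,
      Finset.erase_insert ha]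
    simp only [derivative_sub, derivative_X, derivative_C, sub_zero, one_mul]
    congr 1
    rw [Finset.mul_sum]
    refine Finset.sum_congr rfl fun j hj => ?_
    rw [Finset.erase_insert_of_ne (ne_of_mem_of_not_mem hj ha).symm,
      Finset.prod_insert (fun h => ha (Finset.erase_subset _ _ h))]

open Polynomial in
lemma aux_bound (d : ℕ) (z : Fin d → ℂ) (w : ℂ) (ℓ : ℝ) (hℓ0 : 0 ≤ ℓ)
    (hℓ : ∀ j, ℓ ≤ ‖w - z j‖) :
    ∀ (k : ℕ) (s : Finset (Fin d)),
      ‖(derivative^[k] (∏ j ∈ s, (X - C (z j)))).eval w‖ * ℓ ^ k ≤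
        (s.card.descFactorial k : ℝ) * ∏ j ∈ s, ‖w - z j‖ := by
  intro k
  induction k with
  | zero =>
    intro s
    simp [Polynomial.eval_prod, map_prod, norm_prod, le_refl]
  | succ k ih =>
    intro s
    rcases s.eq_empty_or_nonempty with rfl | hs
    · simp [Function.iterate_succ_apply, Polynomial.derivative_one]
    have hprodnn : ∀ t : Finset (Fin d), (0:ℝ) ≤ ∏ i ∈ t, ‖w - z i‖ :=
      fun t => Finset.prod_nonneg fun i _ => norm_nonneg _
    rw [Function.iterate_succ_apply, aux_deriv_prod, aux_deriv_sum,
      Polynomial.eval_finset_sum]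
    calc ‖∑ j ∈ s, (derivative^[k] (∏ i ∈ s.erase j, (X - C (z i)))).eval w‖
          * ℓ ^ (k+1)
        ≤ (∑ j ∈ s, ‖(derivative^[k] (∏ i ∈ s.erase j, (X - C (z i)))).eval w‖)
          * ℓ ^ (k+1) := by
          apply mul_le_mul_of_nonneg_right (norm_sum_le _ _) (by positivity)
      _ = ∑ j ∈ s, ‖(derivative^[k] (∏ i ∈ s.erase j, (X - C (z i)))).eval w‖
          * ℓ ^ k * ℓ := by
          rw [Finset.sum_mul]
          exact Finset.sum_congr rfl fun j _ => by rw [pow_succ, ← mul_assoc]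
      _ ≤ ∑ j ∈ s, (((s.erase j).card.descFactorial k : ℝ) *
            ∏ i ∈ s.erase j, ‖w - z i‖) * ℓ := by
          refine Finset.sum_le_sum fun j _ => ?_
          exact mul_le_mul_of_nonneg_right (ih (s.erase j)) hℓ0
      _ ≤ ∑ j ∈ s, ((s.card - 1).descFactorial k : ℝ) * ∏ i ∈ s, ‖w - z i‖ := by
          refine Finset.sum_le_sum fun j hj => ?_
          rw [Finset.card_erase_of_mem hj, mul_assoc]
          refine mul_le_mul_of_nonneg_left ?_ (by positivity)
          calc (∏ i ∈ s.erase j, ‖w - z i‖) * ℓ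
              ≤ (∏ i ∈ s.erase j, ‖w - z i‖) * ‖w - z j‖ :=
                mul_le_mul_of_nonneg_left (hℓ j) (hprodnn _)
            _ = ∏ i ∈ s, ‖w - z i‖ := by
                rw [mul_comm]
                exact Finset.mul_prod_erase s (fun i => ‖w - z i‖) hj
      _ = (s.card.descFactorial (k+1) : ℝ) * ∏ i ∈ s, ‖w - z i‖ := by
          rw [Finset.sum_const, nsmul_eq_mul]
          obtain ⟨m, hm⟩ : ∃ m, s.card = m + 1 :=
            ⟨s.card - 1, (Nat.succ_pred_eq_of_pos (Finset.card_pos.mpr hs)).symm⟩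
          rw [hm, Nat.succ_descFactorial_succ]
          push_cast
          ring

/-- If `p(z) = ∏_{j=1}^d (z − z_j)` and `ℓ₀(z) = min_j |z − z_j|`, then for `0 ≤ k ≤ d`,
`|p^{(k)}(z)| ℓ₀(z)^k ≤ (d!/(d−k)!) |p(z)|` for every `z ∈ ℂ`. -/
theorem derivative_bound_of_roots
    (d : ℕ) (hd : 1 ≤ d) (z : Fin d → ℂ) (k : ℕ) (hk : k ≤ d) (w : ℂ) :
    ‖((Polynomial.derivative^[k]
          (∏ j : Fin d, (Polynomial.X - Polynomial.C (z j)))).eval w)‖ *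
      (⨅ j : Fin d, ‖w - z j‖) ^ k ≤
      (d.descFactorial k : ℝ) *
        ‖(∏ j : Fin d, (Polynomial.X - Polynomial.C (z j))).eval w‖ := by
  haveI : Nonempty (Fin d) := ⟨⟨0, hd⟩⟩
  have hbdd : BddBelow (Set.range fun j : Fin d => ‖w - z j‖) :=
    ⟨0, by rintro x ⟨j, rfl⟩; exact norm_nonneg _⟩
  have hℓ0 : 0 ≤ ⨅ j : Fin d, ‖w - z j‖ :=
    le_ciInf fun j => norm_nonneg _
  have hℓ : ∀ j, (⨅ j : Fin d, ‖w - z j‖) ≤ ‖w - z j‖ :=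
    fun j => ciInf_le hbdd j
  have h := aux_bound d z w _ hℓ0 hℓ k Finset.univ
  simpa [Polynomial.eval_prod, map_prod, norm_prod, Finset.card_univ] using h
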